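/- Define F(n,k) = [3n+2k+1] · (q;q^2)_n (q^{2k+1};q^2)_n^2 · q^{-C(n+1,2)-(2n+1)k} / ((q;q)_n^2 (q^2;q^2)_n) and G(n,k) = -(1+q^{n+2k-1}) · (q;q^2)_n (q^{2k+1};q^2)_{n-1}^2 · q^{-C(n,2)-(2n-1)k} / ((1-q)(q;q)_{n-1}^2 (q^2;q^2)_{n-1}), with the convention that 1/(q^2;q^2)_a = 0 for negative integers a (so G(0,k)=0). Then for all integers n ≥ 0 and k ≥ 1, F(n,k-1) - F(n,k) = G(n+1,k) - G(n,k). -/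

import Mathlib

open Polynomial Finset

noncomputable def q : RatFunc ℚ := RatFunc.X

/-- `qpoch a b m = (a;b)_m = ∏_{j=0}^{m-1} (1 - a b^j)`. -/
noncomputable def qpoch (a b : RatFunc ℚ) (m : ℕ) : RatFunc ℚ :=
  ∏ j ∈ Finset.range m, (1 - a * b ^ j)

/-- The q-integer `[m] = (1-q^m)/(1-q)` for any integer `m`. -/
noncomputable def qint (m : ℤ) : RatFunc ℚ := (1 - q ^ m) / (1 - q)

/-- Gaussian binomial coefficient in base `b`. -/
noncomputable def qbin (b : RatFunc ℚ) (M N : ℕ) : RatFunc ℚ :=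
  if N ≤ M then qpoch b b M / (qpoch b b N * qpoch b b (M - N)) else 0

/-- `C2 a = a(a-1)/2`. -/
def C2 (a : ℤ) : ℤ := a * (a - 1) / 2

/-- The polynomial `[n] = 1 + q + ... + q^{n-1}` in `ℚ[q]`. -/
noncomputable def qnPoly (n : ℕ) : Polynomial ℚ := ∑ i ∈ Finset.range n, X ^ i

/-- Congruence of rational functions modulo a polynomial: the reduced numerator of the
difference is divisible by `P` and the reduced denominator is coprime to `P`. -/
def congrMod (x y : RatFunc ℚ) (P : Polynomial ℚ) : Prop :=
  P ∣ (x - y).num ∧ IsCoprime ((x - y).denom) P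

noncomputable def F14 (n k : ℕ) : RatFunc ℚ :=
  (qint (3 * (n : ℤ) + 2 * k + 1) * qpoch q (q ^ 2) n * qpoch (q ^ (2 * k + 1)) (q ^ 2) n ^ 2 *
      q ^ (-(C2 ((n : ℤ) + 1)) - (2 * (n : ℤ) + 1) * k)) /
    (qpoch q q n ^ 2 * qpoch (q ^ 2) (q ^ 2) n)

noncomputable def G14 (n k : ℕ) : RatFunc ℚ :=
  if n = 0 then 0 else
  -(((1 + q ^ (n + 2 * k - 1)) * qpoch q (q ^ 2) n * qpoch (q ^ (2 * k + 1)) (q ^ 2) (n - 1) ^ 2 *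
      q ^ (-(C2 (n : ℤ)) - (2 * (n : ℤ) - 1) * k)) /
    ((1 - q) * qpoch q q (n - 1) ^ 2 * qpoch (q ^ 2) (q ^ 2) (n - 1)))


lemma hq0 : q ≠ 0 := RatFunc.X_ne_zero

lemma one_sub_q_pow_ne_zero (m : ℕ) (hm : 0 < m) : (1 : RatFunc ℚ) - q ^ m ≠ 0 := by
  have hp : (1 - (Polynomial.X : ℚ[X]) ^ m) ≠ 0 := by
    intro h
    have := congrArg (fun p => Polynomial.coeff p m) h
    simp [Polynomial.coeff_one, hm.ne'] at this
  have : (1 : RatFunc ℚ) - q ^ m = algebraMap ℚ[X] (RatFunc ℚ) (1 - Polynomial.X ^ m) := by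
    simp [q, RatFunc.algebraMap_X]
  rw [this]
  exact RatFunc.algebraMap_ne_zero hp

lemma qpoch_pow_ne_zero (a b n : ℕ) (ha : 0 < a) : qpoch (q^a) (q^b) n ≠ 0 := by
  unfold qpoch
  rw [Finset.prod_ne_zero_iff]
  intro j _
  rw [← pow_mul, ← pow_add]
  exact one_sub_q_pow_ne_zero _ (by positivity)

lemma qpoch_succ (a b : RatFunc ℚ) (n : ℕ) :
    qpoch a b (n+1) = qpoch a b n * (1 - a * b ^ n) := Finset.prod_range_succ _ _

lemma qpoch_succ' (a b : RatFunc ℚ) (n : ℕ) :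
    qpoch a b (n+1) = (1 - a) * qpoch (a*b) b n := by
  unfold qpoch
  rw [Finset.prod_range_succ']
  simp only [pow_zero, mul_one]
  rw [mul_comm]
  congr 1
  exact Finset.prod_congr rfl fun j _ => by ring

lemma C2_succ (a : ℤ) : C2 (a + 1) = C2 a + a := by
  obtain ⟨c, hc⟩ := Int.even_mul_succ_self (a - 1)
  unfold C2
  have h2 : (a+1)*(a+1-1) = (a-1)*((a-1)+1) + 2*a := by ring
  have h3 : a*(a-1) = (a-1)*((a-1)+1) := by ring
  omega

set_option maxHeartbeats 1000000 in
lemma skey_wz {F : Type*} [Field F] (x u v : F)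
    (h2 : 1 - x*u ≠ 0) (h3 : 1 - x^2*u^2 ≠ 0) (h4 : 1 - v^2*x*(u^2*x^2) ≠ 0) :
    (1 - u^3*v^2*x^4) * (1 - x*u^2) * ((1-v^2*x)*(1 - v^2*x^3*u^2))^2 * (u^2*x^3) *
        ((1 - v^2*x*(u^2*x^2))⁻¹)^2 * ((1-x*u)⁻¹)^2 * (1-x^2*u^2)⁻¹
      - (1 - u^3*v^2*x^6) * (1 - x*u^2) * (1 - v^2*x^3*u^2)^2 *
        ((1-x*u)⁻¹)^2 * (1-x^2*u^2)⁻¹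
    = -((1 + u*v^2*x^3) * ((1 - x*u^2)*(1 - x*(u^2*x^2))) * (1 - v^2*x^3*u^2)^2 *
        ((1-x*u)⁻¹)^2 * (1-x^2*u^2)⁻¹)
      - -((1 + u*v^2*x^2) * (1 - x*u^2) * (u*v^2*x^3)) := by
  have hj2 := mul_inv_cancel₀ h2
  have hj3 := mul_inv_cancel₀ h3
  have hj4 := mul_inv_cancel₀ h4
  linear_combination
    ((((1 - u^3*v^2*x^6) * (1 - x*u^2) * (1 - v^2*x^3*u^2)^2
        - (1 + u*v^2*x^3) * ((1 - x*u^2)*(1 - x*(u^2*x^2))) * (1 - v^2*x^3*u^2)^2)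
          * ((1-x*u)⁻¹)^2 * (1-x^2*u^2)⁻¹
      + ((1 + u*v^2*x^2) * (1 - x*u^2) * (u*v^2*x^3))
          * ((1-x*u)*(1-x*u)⁻¹)^2 * ((1-x^2*u^2)*(1-x^2*u^2)⁻¹))
      * ((1 - v^2*x*(u^2*x^2))*(1 - v^2*x*(u^2*x^2))⁻¹ + 1)) * hj4
    + (((1 + u*v^2*x^2) * (1 - x*u^2) * (u*v^2*x^3))
        * ((1-x*u)*(1-x*u)⁻¹ + 1) * ((1-x^2*u^2)*(1-x^2*u^2)⁻¹)) * hj2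
    + ((1 + u*v^2*x^2) * (1 - x*u^2) * (u*v^2*x^3)) * hj3

set_option maxHeartbeats 2000000 in
theorem q_wz_pair_one (n k : ℕ) (hk : 1 ≤ k) :
    F14 n (k - 1) - F14 n k = G14 (n + 1) k - G14 n k := by
  obtain ⟨m, rfl⟩ : ∃ m, k = m + 1 := ⟨k - 1, (Nat.sub_add_cancel hk).symm⟩
  clear hk
  have h1 : (1:RatFunc ℚ) - q ≠ 0 := by
    have := one_sub_q_pow_ne_zero 1 one_pos; rwa [pow_one] at this
  simp only [Nat.add_sub_cancel]
  rcases n with _ | n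
  · -- n = 0
    have hC : C2 1 = 0 := by decide
    simp only [F14, G14, qint, qpoch, Finset.prod_range_zero, Finset.prod_range_one,
      Nat.cast_zero, Nat.cast_one, Nat.cast_add, hC, zero_add, add_zero, mul_one, one_mul,
      mul_zero, zero_mul, one_pow, if_neg (Nat.one_ne_zero), if_pos rfl, pow_zero, sub_zero]
    norm_num
    rw [show (-1 + -(m:ℤ)) = -((m+1 : ℕ):ℤ) by push_cast; ring,
        show (2*(m:ℤ)+1) = ((2*m+1 : ℕ):ℤ) by push_cast; ring,
        show (2*((m:ℤ)+1)+1) = ((2*m+3 : ℕ):ℤ) by push_cast; ring,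
        zpow_neg, zpow_natCast, zpow_natCast, zpow_natCast]
    field_simp [hq0]
    ring
  · -- n successor
    simp only [F14, G14, qint, if_neg (Nat.succ_ne_zero _), Nat.add_sub_cancel]
    push_cast
    rw [show n+1+1+2*(m+1)-1 = n+2*m+3 by omega, show n+1+2*(m+1)-1 = n+2*m+2 by omega,
        show 2*(m+1)+1 = 2*m+3 by ring]
    set e1 : ℤ := -C2 (↑n + 1 + 1) - (2 * (↑n + 1) + 1) * (↑m + 1) with he1
    rw [show (3*((n:ℤ)+1)+2*↑m+1) = ((3*n+2*m+4 : ℕ):ℤ) by push_cast; ring,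
        show (3*((n:ℤ)+1)+2*(↑m+1)+1) = ((3*n+2*m+6 : ℕ):ℤ) by push_cast; ring,
        show (-C2 ((n:ℤ) + 1 + 1) - (2 * (↑n + 1) + 1) * ↑m) = e1 + ((2*n+3 : ℕ):ℤ) by
          rw [he1]; push_cast; ring,
        show (-C2 ((n:ℤ) + 1 + 1) - (2 * (↑n + 1 + 1) - 1) * (↑m + 1)) = e1 by rw [he1]; ring,
        show (-C2 ((n:ℤ) + 1) - (2 * (↑n + 1) - 1) * (↑m + 1)) = e1 + ((n+2*m+3 : ℕ):ℤ) by
          rw [he1]; simp only [C2_succ]; push_cast; ring]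
    simp only [zpow_add₀ hq0, zpow_natCast]
    set E := q ^ e1 with hE
    have hEne : E ≠ 0 := zpow_ne_zero _ hq0
    have hx4 : (1:RatFunc ℚ) - q^(2*m+1) * (q^2)^(n+1) ≠ 0 := by
      rw [show (1:RatFunc ℚ) - q^(2*m+1)*(q^2)^(n+1) = 1 - q^(2*m+2*n+3) by ring]
      exact one_sub_q_pow_ne_zero _ (by omega)
    have hB'' : qpoch (q^(2*m+1)) (q^2) (n+1)
        = (1 - q^(2*m+1)) * (qpoch (q^(2*m+3)) (q^2) (n+1)) / (1 - q^(2*m+1)*(q^2)^(n+1)) := by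
      rw [eq_div_iff hx4, ← qpoch_succ, qpoch_succ']
      rw [show q^(2*m+1)*q^2 = q^(2*m+3) by ring]
    rw [hB'']
    rw [qpoch_succ q (q^2) (n+1), qpoch_succ q (q^2) n, qpoch_succ (q^(2*m+3)) (q^2) n,
        qpoch_succ q q n, qpoch_succ (q^2) (q^2) n]
    have hC : qpoch q q n ≠ 0 := by
      have := qpoch_pow_ne_zero 1 1 n one_pos; rwa [pow_one] at this
    have hD : qpoch (q^2) (q^2) n ≠ 0 := qpoch_pow_ne_zero 2 2 n (by norm_num)
    have hx2 : (1:RatFunc ℚ) - q * q^n ≠ 0 := by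
      rw [show (1:RatFunc ℚ) - q*q^n = 1 - q^(n+1) by ring]
      exact one_sub_q_pow_ne_zero _ (by omega)
    have hx3 : (1:RatFunc ℚ) - q^2 * (q^n)^2 ≠ 0 := by
      rw [show (1:RatFunc ℚ) - q^2*(q^n)^2 = 1 - q^(2*n+2) by ring]
      exact one_sub_q_pow_ne_zero _ (by omega)
    have hx4' : (1:RatFunc ℚ) - (q^m)^2*q*((q^n)^2*q^2) ≠ 0 := by
      rw [show (1:RatFunc ℚ) - (q^m)^2*q*((q^n)^2*q^2) = 1 - q^(2*m+2*n+3) by ring]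
      exact one_sub_q_pow_ne_zero _ (by omega)
    clear_value E
    clear he1 hB'' hx4 hE
    generalize qpoch q (q^2) n = A
    generalize qpoch (q^(2*m+3)) (q^2) n = P
    generalize hCq : qpoch q q n = Cq at hC
    generalize hDq : qpoch (q^2) (q^2) n = Dq at hD
    simp only [div_eq_mul_inv, mul_inv, ← inv_pow]
    linear_combination (A * P^2 * E * (1-q)⁻¹ * (Cq⁻¹)^2 * Dq⁻¹) *
      skey_wz q (q^n) (q^m) hx2 hx3 hx4'
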